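/- arXiv:2212.07587 — 2 statements merged into one kernel-verified Lean document; each statement's English description precedes it below -/
import Mathlib

section
/- (Primal residual bound.) Let (x^{k+1}, ỹ^{k+1}, y^{k+1}) be produced by one SPIDA iteration from (x^k, y^k), with ψ differentiable convex and ∇ψ Lipschitz continuous with modulus L_ψ. Then there exists ξ^{k+1} ∈ ∂f(x^{k+1}) such that ‖x^{k+1} − Π_X[x^{k+1} − (ξ^{k+1} + Aᵀy^{k+1})]‖² ≤ 2‖AAᵀ‖ ‖ỹ^{k+1} − y^{k+1}‖² + 2μ² L_ψ² ‖x^{k+1} − x^k‖², where Π_X is the Euclidean projection onto X and ‖AAᵀ‖ is the spectral norm of AAᵀ. -/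
noncomputable section
open scoped RealInnerProductSpace
open Filter

abbrev Euc (d : ℕ) : Type := EuclideanSpace ℝ (Fin d)

/-- Bregman distance associated with kernel `φ` whose gradient map is `φ'`. -/
def Breg {d : ℕ} (φ : Euc d → ℝ) (φ' : Euc d → Euc d) (x y : Euc d) : ℝ :=
  φ x - φ y - ⟪φ' y, x - y⟫

/-- Convex subdifferential. -/
def subdiff {d : ℕ} (h : Euc d → ℝ) (x : Euc d) : Set (Euc d) :=
  {ξ | ∀ z, h x + ⟪z - x, ξ⟫ ≤ h z}

open Classical in
/-- Euclidean (metric) projection onto a set (the nearest point, when it exists). -/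
def projOn {d : ℕ} (X : Set (Euc d)) (z : Euc d) : Euc d :=
  if h : ∃ p ∈ X, ∀ w ∈ X, ‖z - p‖ ≤ ‖z - w‖ then h.choose else z

section Aux

open Topology

lemma projOn_spec {d : ℕ} {X : Set (Euc d)} (hXne : X.Nonempty) (hXcl : IsClosed X)
    (hXcv : Convex ℝ X) (u : Euc d) :
    projOn X u ∈ X ∧ ∀ z ∈ X, ⟪u - projOn X u, z - projOn X u⟫ ≤ 0 := by
  obtain ⟨v, hvX, hv⟩ := exists_norm_eq_iInf_of_complete_convex hXne hXcl.isComplete hXcv u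
  have hbdd : BddBelow (Set.range fun w : X => ‖u - w‖) :=
    ⟨0, by rintro _ ⟨w, rfl⟩; positivity⟩
  have hex : ∃ p ∈ X, ∀ w ∈ X, ‖u - p‖ ≤ ‖u - w‖ := by
    refine ⟨v, hvX, fun w hw => ?_⟩
    rw [hv]; exact ciInf_le hbdd ⟨w, hw⟩
  have hproj : projOn X u = hex.choose := dif_pos hex
  obtain ⟨hpX, hp⟩ := hex.choose_spec
  rw [hproj]
  haveI : Nonempty X := ⟨⟨v, hvX⟩⟩
  refine ⟨hpX, ?_⟩
  rw [← norm_eq_iInf_iff_real_inner_le_zero hXcv hpX]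
  exact le_antisymm (le_ciInf fun w => hp w w.2) (ciInf_le hbdd ⟨_, hpX⟩)

lemma key_ineq {d : ℕ} {X : Set (Euc d)} (hXcv : Convex ℝ X)
    {f : Euc d → ℝ} (hf : ConvexOn ℝ Set.univ f)
    {s : Euc d → ℝ} {v : Euc d} {x1 : Euc d} (hx1 : x1 ∈ X)
    (hs : HasGradientAt s v x1)
    (hmin : ∀ z ∈ X, f x1 + s x1 ≤ f z + s z) :
    ∀ z ∈ X, f x1 - ⟪v, z - x1⟫ ≤ f z := by
  intro z hz
  set dd : Euc d := z - x1 with hdd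
  set h : ℝ → ℝ := fun t => s (x1 + t • dd) with hh
  have hcurve : HasDerivAt (fun t : ℝ => x1 + t • dd) dd 0 := by
    simpa using ((hasDerivAt_id (0:ℝ)).smul_const dd).const_add x1
  have hderiv : HasDerivAt h ⟪v, dd⟫ 0 := by
    have hfd := hs.hasFDerivAt
    have : x1 = x1 + (0:ℝ) • dd := by simp
    rw [this] at hfd
    have := hfd.comp_hasDerivAt 0 hcurve
    simpa [InnerProductSpace.toDual_apply_apply, hh, Function.comp_def] using this
  have hslope : Tendsto (slope h 0) (𝓝[>] 0) (𝓝 ⟪v, dd⟫) :=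
    (hasDerivAt_iff_tendsto_slope.mp hderiv).mono_left
      (nhdsWithin_mono 0 fun t ht => ne_of_gt ht)
  have hbound : ∀ᶠ t in 𝓝[>] (0:ℝ), -(f z - f x1) ≤ slope h 0 t := by
    filter_upwards [Ioc_mem_nhdsGT (zero_lt_one)] with t ht
    obtain ⟨ht0, ht1⟩ := ht
    have hmem : x1 + t • dd ∈ X := by
      have : x1 + t • dd = (1 - t) • x1 + t • z := by
        rw [hdd]; module
      rw [this]
      exact hXcv hx1 hz (by linarith) (le_of_lt ht0) (by ring)
    have hcvx : f (x1 + t • dd) ≤ (1 - t) * f x1 + t * f z := by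
      have : x1 + t • dd = (1 - t) • x1 + t • z := by rw [hdd]; module
      rw [this]
      have := hf.2 (Set.mem_univ x1) (Set.mem_univ z) (by linarith : (0:ℝ) ≤ 1 - t)
        (le_of_lt ht0) (by ring)
      simpa [smul_eq_mul] using this
    have hm := hmin (x1 + t • dd) hmem
    have hs0 : h 0 = s x1 := by simp [hh]
    have hst : h t = s (x1 + t • dd) := rfl
    rw [slope_def_field, sub_zero, le_div_iff₀ ht0]
    linarith [hm, hcvx, hs0.le, hs0.ge, hst.le, hst.ge]
  have hfin := ge_of_tendsto hslope hbound
  linarith [hfin]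

lemma exists_subgrad_split {d : ℕ} {X : Set (Euc d)} (hXcv : Convex ℝ X)
    {f : Euc d → ℝ} (hf : ConvexOn ℝ Set.univ f) (hfc : Continuous f)
    {x1 : Euc d} (hx1 : x1 ∈ X) (v : Euc d)
    (hkey : ∀ z ∈ X, f x1 - ⟪v, z - x1⟫ ≤ f z) :
    ∃ ξ, (∀ z, f x1 + ⟪z - x1, ξ⟫ ≤ f z) ∧ (∀ z ∈ X, 0 ≤ ⟪ξ + v, z - x1⟫) := by
  set F : Euc d → ℝ := fun dd => f (x1 + dd) - f x1 with hFdef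
  have hF0 : F 0 = 0 := by simp [hFdef]
  have hFconv : ∀ (d1 d2 : Euc d) (a b : ℝ), 0 ≤ a → 0 ≤ b → a + b = 1 →
      F (a • d1 + b • d2) ≤ a * F d1 + b * F d2 := by
    intro d1 d2 a b ha hb hab
    have h := hf.2 (Set.mem_univ (x1 + d1)) (Set.mem_univ (x1 + d2)) ha hb hab
    have hpt : a • (x1 + d1) + b • (x1 + d2) = x1 + (a • d1 + b • d2) := by
      rw [smul_add, smul_add]
      rw [show a • x1 + a • d1 + (b • x1 + b • d2) = (a • x1 + b • x1) + (a • d1 + b • d2) by abel]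
      rw [Convex.combo_self hab x1]
    rw [hpt] at h
    simp only [smul_eq_mul] at h
    have e : a * f x1 + b * f x1 = f x1 := by rw [← add_mul, hab, one_mul]
    simp only [hFdef]
    linarith
  set S : Set (Euc d × ℝ) := {p | F p.1 < p.2} with hSdef
  set T : Set (Euc d × ℝ) := {p | x1 + p.1 ∈ X ∧ p.2 ≤ -⟪v, p.1⟫} with hTdef
  have hSopen : IsOpen S := by
    have : Continuous fun p : Euc d × ℝ => F p.1 :=
      (hfc.comp (continuous_const.add continuous_fst)).sub continuous_const
    exact isOpen_lt this continuous_snd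
  have hSconv : Convex ℝ S := by
    rintro ⟨d1, t1⟩ h1 ⟨d2, t2⟩ h2 a b ha hb hab
    simp only [hSdef, Set.mem_setOf_eq] at h1 h2 ⊢
    have hF := hFconv d1 d2 a b ha hb hab
    rcases eq_or_lt_of_le ha with rfl | ha'
    · simp only [zero_add] at hab; subst hab; simpa using h2
    · calc F (a • d1 + b • d2) ≤ a * F d1 + b * F d2 := hF
        _ < a * t1 + b * t2 := by
          rcases eq_or_lt_of_le hb with rfl | hb'
          · simpa using (mul_lt_mul_of_pos_left h1 ha')
          · exact add_lt_add (mul_lt_mul_of_pos_left h1 ha') (mul_lt_mul_of_pos_left h2 hb')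
  have hTconv : Convex ℝ T := by
    rintro ⟨d1, t1⟩ ⟨hm1, ht1⟩ ⟨d2, t2⟩ ⟨hm2, ht2⟩ a b ha hb hab
    constructor
    · have := hXcv hm1 hm2 ha hb hab
      have hpt : a • (x1 + d1) + b • (x1 + d2) = x1 + (a • d1 + b • d2) := by
        rw [smul_add, smul_add]
        rw [show a • x1 + a • d1 + (b • x1 + b • d2) = (a • x1 + b • x1) + (a • d1 + b • d2) by abel]
        rw [Convex.combo_self hab x1]
      rw [hpt] at this
      exact this
    · show a • t1 + b • t2 ≤ -⟪v, a • d1 + b • d2⟫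
      rw [inner_add_right, real_inner_smul_right, real_inner_smul_right]
      simp only [smul_eq_mul]
      nlinarith [mul_le_mul_of_nonneg_left ht1 ha, mul_le_mul_of_nonneg_left ht2 hb]
  have hdisj : Disjoint S T := by
    rw [Set.disjoint_left]
    rintro ⟨dd, t⟩ hS hT
    obtain ⟨hmem, ht⟩ := hT
    have h1 : -⟪v, dd⟫ ≤ F dd := by
      have := hkey (x1 + dd) hmem
      simp only [hFdef]
      have : f x1 - ⟪v, dd⟫ ≤ f (x1 + dd) := by simpa using this
      linarith
    exact absurd (lt_of_lt_of_le hS (ht.trans h1)) (lt_irrefl _)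
  obtain ⟨L, c, hSc, hTc⟩ := geometric_hahn_banach_open hSconv hSopen hTconv hdisj
  set β : ℝ := L (0, 1) with hβdef
  set ℓc : Euc d →L[ℝ] ℝ := L.comp (ContinuousLinearMap.inl ℝ (Euc d) ℝ) with hℓcdef
  set ℓ : Euc d → ℝ := fun dd => L (dd, 0) with hℓdef
  have hℓc : ∀ dd, ℓc dd = ℓ dd := by intro dd; simp [hℓcdef, hℓdef]
  have hdec : ∀ (dd : Euc d) (t : ℝ), L (dd, t) = ℓ dd + t * β := by
    intro dd t
    have : (dd, t) = (dd, (0:ℝ)) + t • ((0 : Euc d), (1:ℝ)) := by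
      simp [Prod.ext_iff]
    rw [this, map_add, map_smul]
    simp [hℓdef, hβdef, smul_eq_mul]
  have hc_nonpos : c ≤ 0 := by
    have : ((0 : Euc d), (0:ℝ)) ∈ T := by
      refine ⟨by simpa using hx1, by simp⟩
    have := hTc _ this
    rw [hdec] at this
    simpa [hℓdef, Prod.mk_zero_zero] using this
  have hSε : ∀ ε : ℝ, 0 < ε → ε * β < c := by
    intro ε hε
    have : ((0 : Euc d), ε) ∈ S := by simp [hSdef, hF0, hε]
    have := hSc _ this
    rwa [hdec, show ℓ (0 : Euc d) = 0 by simp [hℓdef, Prod.mk_zero_zero], zero_add] at this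
  have hβneg : β < 0 := by
    have := hSε 1 one_pos
    linarith
  have hc0 : c = 0 := by
    rcases lt_or_eq_of_le hc_nonpos with hc | hc
    · exfalso
      have hε : 0 < c / (2 * β) := div_pos_of_neg_of_neg hc (by linarith)
      have h1 := hSε _ hε
      have hβne : β ≠ 0 := ne_of_lt hβneg
      have h2 : c / (2 * β) * β = c / 2 := by field_simp
      rw [h2] at h1
      linarith
    · exact hc
  have hmajor : ∀ dd : Euc d, ℓ dd + β * F dd ≤ 0 := by
    intro dd
    by_contra h
    push_neg at h
    have hε : 0 < (ℓ dd + β * F dd) / (-β) := div_pos h (by linarith)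
    have hmem : (dd, F dd + (ℓ dd + β * F dd) / (-β)) ∈ S := by
      simp only [hSdef, Set.mem_setOf_eq]
      linarith
    have := hSc _ hmem
    rw [hdec, hc0] at this
    have hne : -β ≠ 0 := by linarith
    have : ℓ dd + (F dd + (ℓ dd + β * F dd) / (-β)) * β < 0 := this
    rw [add_mul, div_mul_eq_mul_div] at this
    have heq : (ℓ dd + β * F dd) * β / (-β) = -(ℓ dd + β * F dd) := by
      field_simp
      rw [div_self (ne_of_lt hβneg)]
    rw [heq] at this
    linarith
  have hminor : ∀ dd : Euc d, x1 + dd ∈ X → β * ⟪v, dd⟫ ≤ ℓ dd := by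
    intro dd hmem
    have : (dd, -⟪v, dd⟫) ∈ T := ⟨hmem, le_refl _⟩
    have := hTc _ this
    rw [hdec, hc0] at this
    linarith
  set ξ : Euc d := (-β)⁻¹ • ((InnerProductSpace.toDual ℝ (Euc d)).symm ℓc) with hξdef
  have hβpos : (0:ℝ) < -β := by linarith
  have hinner : ∀ dd : Euc d, ⟪ξ, dd⟫ = (-β)⁻¹ * ℓ dd := by
    intro dd
    rw [hξdef, real_inner_smul_left, InnerProductSpace.toDual_symm_apply, hℓc]
  refine ⟨ξ, ?_, ?_⟩
  · intro z
    have h := hmajor (z - x1)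
    have hFz : F (z - x1) = f z - f x1 := by
      simp only [hFdef]
      rw [show x1 + (z - x1) = z by abel]
    have h2 : (-β)⁻¹ * ℓ (z - x1) ≤ F (z - x1) := by
      rw [inv_mul_le_iff₀ hβpos]
      linarith
    have h5 : (-β)⁻¹ * ℓ (z - x1) ≤ f z - f x1 := by rw [← hFz]; exact h2
    calc f x1 + ⟪z - x1, ξ⟫ = f x1 + (-β)⁻¹ * ℓ (z - x1) := by rw [real_inner_comm, hinner]
      _ ≤ f x1 + (f z - f x1) := add_le_add_right h5 (f x1)
      _ = f z := by ring
  · intro z hz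
    have h := hminor (z - x1) (by rwa [show x1 + (z - x1) = z by abel])
    have h2 := mul_le_mul_of_nonneg_left h (le_of_lt (inv_pos.mpr hβpos))
    have hβne : β ≠ 0 := ne_of_lt hβneg
    have h3 : (-β)⁻¹ * (β * ⟪v, z - x1⟫) = -⟪v, z - x1⟫ := by
      field_simp
    have h4 : -⟪v, z - x1⟫ ≤ (-β)⁻¹ * ℓ (z - x1) := by rw [← h3]; exact h2
    rw [inner_add_left, hinner]
    have h6 := add_le_add_right h4 ⟪v, z - x1⟫
    simpa using h6

lemma adjoint_sq_bound {n m : ℕ} (A : Euc n →L[ℝ] Euc m) (w : Euc m) :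
    ‖ContinuousLinearMap.adjoint A w‖ ^ 2 ≤
      ‖A.comp (ContinuousLinearMap.adjoint A)‖ * ‖w‖ ^ 2 := by
  have e1 : ‖ContinuousLinearMap.adjoint A w‖ ^ 2
      = ⟪w, A (ContinuousLinearMap.adjoint A w)⟫ := by
    rw [← real_inner_self_eq_norm_sq, ContinuousLinearMap.adjoint_inner_left]
  have e2 : ⟪w, A (ContinuousLinearMap.adjoint A w)⟫
      ≤ ‖w‖ * ‖A.comp (ContinuousLinearMap.adjoint A) w‖ := by
    have := real_inner_le_norm w (A (ContinuousLinearMap.adjoint A w))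
    simpa [ContinuousLinearMap.comp_apply] using this
  have e3 : ‖A.comp (ContinuousLinearMap.adjoint A) w‖
      ≤ ‖A.comp (ContinuousLinearMap.adjoint A)‖ * ‖w‖ :=
    (A.comp (ContinuousLinearMap.adjoint A)).le_opNorm w
  have hwn : (0:ℝ) ≤ ‖w‖ := norm_nonneg _
  calc ‖ContinuousLinearMap.adjoint A w‖ ^ 2
      = ⟪w, A (ContinuousLinearMap.adjoint A w)⟫ := e1
    _ ≤ ‖w‖ * ‖A.comp (ContinuousLinearMap.adjoint A) w‖ := e2
    _ ≤ ‖w‖ * (‖A.comp (ContinuousLinearMap.adjoint A)‖ * ‖w‖) :=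
        mul_le_mul_of_nonneg_left e3 hwn
    _ = ‖A.comp (ContinuousLinearMap.adjoint A)‖ * ‖w‖ ^ 2 := by ring

lemma grad_of_linear_plus_breg {n m : ℕ} (A : Euc n →L[ℝ] Euc m) (yt1 : Euc m) (μ : ℝ)
    (ψ : Euc n → ℝ) (ψ' : Euc n → Euc n) (hψg : ∀ z, HasGradientAt ψ (ψ' z) z)
    (xk x1 : Euc n) :
    HasGradientAt (fun x => ⟪A x, yt1⟫ + μ * Breg ψ ψ' x xk)
      (ContinuousLinearMap.adjoint A yt1 + μ • (ψ' x1 - ψ' xk)) x1 := by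
  rw [hasGradientAt_iff_hasFDerivAt]
  set W : Euc n := ContinuousLinearMap.adjoint A yt1 with hW
  have h1 : HasFDerivAt (fun x : Euc n => ⟪A x, yt1⟫)
      (InnerProductSpace.toDual ℝ (Euc n) W) x1 := by
    apply (InnerProductSpace.toDual ℝ (Euc n) W).hasFDerivAt.congr_of_eventuallyEq
    filter_upwards with x
    rw [InnerProductSpace.toDual_apply_apply, hW, ContinuousLinearMap.adjoint_inner_left,
      real_inner_comm]
  have hlin : HasFDerivAt (fun x : Euc n => ⟪ψ' xk, x⟫)
      (InnerProductSpace.toDual ℝ (Euc n) (ψ' xk)) x1 := by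
    apply (InnerProductSpace.toDual ℝ (Euc n) (ψ' xk)).hasFDerivAt.congr_of_eventuallyEq
    filter_upwards with x
    rw [InnerProductSpace.toDual_apply_apply]
  have h3 : HasFDerivAt (fun x : Euc n => ⟪ψ' xk, x - xk⟫)
      (InnerProductSpace.toDual ℝ (Euc n) (ψ' xk)) x1 := by
    apply (hlin.sub_const ⟪ψ' xk, xk⟫).congr_of_eventuallyEq
    filter_upwards with x
    rw [inner_sub_right]
  have hB : HasFDerivAt (fun x => Breg ψ ψ' x xk)
      (InnerProductSpace.toDual ℝ (Euc n) (ψ' x1)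
        - InnerProductSpace.toDual ℝ (Euc n) (ψ' xk)) x1 := by
    simp only [Breg]
    exact (((hψg x1).hasFDerivAt.sub_const (ψ xk)).sub h3)
  have htot := h1.add (hB.const_mul μ)
  have heq : InnerProductSpace.toDual ℝ (Euc n) (W + μ • (ψ' x1 - ψ' xk)) =
      InnerProductSpace.toDual ℝ (Euc n) W
        + μ • (InnerProductSpace.toDual ℝ (Euc n) (ψ' x1)
            - InnerProductSpace.toDual ℝ (Euc n) (ψ' xk)) := by
    rw [map_add, map_smul, map_sub]
  rw [heq]
  exact htot

lemma proj_residual_bound {d : ℕ} {X : Set (Euc d)} (hXne : X.Nonempty) (hXcl : IsClosed X)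
    (hXcv : Convex ℝ X) {x1 ξ v : Euc d} (q : Euc d) (hx1 : x1 ∈ X)
    (hξ2 : ∀ z ∈ X, 0 ≤ ⟪ξ + v, z - x1⟫) :
    ‖x1 - projOn X (x1 - (ξ + q))‖ ≤ ‖q - v‖ := by
  set u : Euc d := x1 - (ξ + q) with hu
  obtain ⟨hpX, hpVI⟩ := projOn_spec hXne hXcl hXcv u
  set p : Euc d := projOn X u with hp
  have h1 : ⟪u - p, x1 - p⟫ ≤ 0 := hpVI x1 hx1
  have h2 : (0:ℝ) ≤ ⟪ξ + v, p - x1⟫ := hξ2 p hpX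
  have h2' : ⟪ξ + v, x1 - p⟫ ≤ 0 := by
    have e : ⟪ξ + v, x1 - p⟫ = -⟪ξ + v, p - x1⟫ := by
      rw [← inner_neg_right]; congr 1; abel
    rw [e]; linarith
  have h3 : ‖x1 - p‖ ^ 2 ≤ ⟪q - v, x1 - p⟫ := by
    have e : (x1 : Euc d) - p = (u - p) + ((ξ + v) + (q - v)) := by rw [hu]; abel
    calc ‖x1 - p‖ ^ 2 = ⟪x1 - p, x1 - p⟫ := (real_inner_self_eq_norm_sq _).symm
      _ = ⟪u - p, x1 - p⟫ + (⟪ξ + v, x1 - p⟫ + ⟪q - v, x1 - p⟫) := by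
          nth_rewrite 1 [e]
          rw [inner_add_left, inner_add_left]
      _ ≤ ⟪q - v, x1 - p⟫ := by linarith
  have h4 : ‖x1 - p‖ ^ 2 ≤ ‖q - v‖ * ‖x1 - p‖ := h3.trans (real_inner_le_norm _ _)
  rcases eq_or_lt_of_le (norm_nonneg (x1 - p)) with h0 | h0
  · rw [← h0]; exact norm_nonneg _
  · rw [pow_two] at h4
    exact le_of_mul_le_mul_right h4 h0

end Aux

/-- primal residual bound for one SPIDA iteration. -/
theorem spida_primal_residual_bound {n m : ℕ}
    (X : Set (Euc n)) (Y : Set (Euc m))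
    (hXne : X.Nonempty) (hXcl : IsClosed X) (hXcv : Convex ℝ X)
    (hYne : Y.Nonempty) (hYcl : IsClosed Y) (hYcv : Convex ℝ Y)
    (f : Euc n → ℝ) (g : Euc m → ℝ)
    (hf : ConvexOn ℝ Set.univ f) (hflsc : LowerSemicontinuous f)
    (hg : ConvexOn ℝ Set.univ g) (hglsc : LowerSemicontinuous g)
    (A : Euc n →L[ℝ] Euc m)
    (γ μ : ℝ) (hγ : 0 < γ) (hμ : 0 < μ)
    (φ : Euc m → ℝ) (φ' : Euc m → Euc m)
    (hφg : ∀ z, HasGradientAt φ (φ' z) z) (hφcv : ConvexOn ℝ Set.univ φ)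
    (ψ : Euc n → ℝ) (ψ' : Euc n → Euc n)
    (hψg : ∀ z, HasGradientAt ψ (ψ' z) z) (hψcv : ConvexOn ℝ Set.univ ψ)
    (xk x1 : Euc n) (yk yt1 y1 : Euc m)
    (hxk : xk ∈ X) (hyk : yk ∈ Y)
    (hyt1mem : yt1 ∈ Y)
    (hyt1max : ∀ y ∈ Y, -g y + ⟪A xk, y⟫ - γ * Breg φ φ' y yk ≤
      -g yt1 + ⟪A xk, yt1⟫ - γ * Breg φ φ' yt1 yk)
    (hx1mem : x1 ∈ X)
    (hx1min : ∀ x ∈ X, f x1 + ⟪A x1, yt1⟫ + μ * Breg ψ ψ' x1 xk ≤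
      f x + ⟪A x, yt1⟫ + μ * Breg ψ ψ' x xk)
    (hy1mem : y1 ∈ Y)
    (hy1max : ∀ y ∈ Y, -g y + ⟪A x1, y⟫ - γ * Breg φ φ' y yk ≤
      -g y1 + ⟪A x1, y1⟫ - γ * Breg φ φ' y1 yk)
    (Lψ : NNReal) (hψlip : LipschitzWith Lψ ψ') :
    ∃ ξ ∈ subdiff f x1,
      ‖x1 - projOn X (x1 - (ξ + ContinuousLinearMap.adjoint A y1))‖ ^ 2 ≤
        2 * ‖A.comp (ContinuousLinearMap.adjoint A)‖ * ‖yt1 - y1‖ ^ 2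
          + 2 * μ ^ 2 * (Lψ : ℝ) ^ 2 * ‖x1 - xk‖ ^ 2 := by
  classical
  have hsg : HasGradientAt (fun x => ⟪A x, yt1⟫ + μ * Breg ψ ψ' x xk)
      (ContinuousLinearMap.adjoint A yt1 + μ • (ψ' x1 - ψ' xk)) x1 :=
    grad_of_linear_plus_breg A yt1 μ ψ ψ' hψg xk x1
  have hmin : ∀ z ∈ X, f x1 + (⟪A x1, yt1⟫ + μ * Breg ψ ψ' x1 xk) ≤
      f z + (⟪A z, yt1⟫ + μ * Breg ψ ψ' z xk) := fun z hz => by linarith [hx1min z hz]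
  have hkey := key_ineq hXcv hf hx1mem hsg hmin
  have hfc : Continuous f := by
    rw [← continuousOn_univ]
    exact hf.continuousOn isOpen_univ
  obtain ⟨ξ, hξ1, hξ2⟩ := exists_subgrad_split hXcv hf hfc hx1mem _ hkey
  refine ⟨ξ, hξ1, ?_⟩
  have h5 := proj_residual_bound hXne hXcl hXcv (ContinuousLinearMap.adjoint A y1) hx1mem hξ2
  have htri : ‖ContinuousLinearMap.adjoint A y1
        - (ContinuousLinearMap.adjoint A yt1 + μ • (ψ' x1 - ψ' xk))‖
      ≤ ‖ContinuousLinearMap.adjoint A (y1 - yt1)‖ + μ * ‖ψ' x1 - ψ' xk‖ := by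
    have e : ContinuousLinearMap.adjoint A y1
        - (ContinuousLinearMap.adjoint A yt1 + μ • (ψ' x1 - ψ' xk))
        = ContinuousLinearMap.adjoint A (y1 - yt1) - μ • (ψ' x1 - ψ' xk) := by
      rw [map_sub]; abel
    rw [e]
    refine (norm_sub_le _ _).trans ?_
    rw [norm_smul]
    simp [abs_of_pos hμ]
  have h6 : ‖x1 - projOn X (x1 - (ξ + ContinuousLinearMap.adjoint A y1))‖
      ≤ ‖ContinuousLinearMap.adjoint A (y1 - yt1)‖ + μ * ‖ψ' x1 - ψ' xk‖ :=
    h5.trans htri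
  have ha2 : ‖ContinuousLinearMap.adjoint A (y1 - yt1)‖ ^ 2 ≤
      ‖A.comp (ContinuousLinearMap.adjoint A)‖ * ‖yt1 - y1‖ ^ 2 := by
    have := adjoint_sq_bound A (y1 - yt1)
    rwa [norm_sub_rev y1 yt1] at this
  have hb : ‖ψ' x1 - ψ' xk‖ ≤ (Lψ : ℝ) * ‖x1 - xk‖ := by
    have := hψlip.dist_le_mul x1 xk
    simpa [dist_eq_norm] using this
  have hΔn : (0:ℝ) ≤ ‖ψ' x1 - ψ' xk‖ := norm_nonneg _
  have hb2 : ‖ψ' x1 - ψ' xk‖ ^ 2 ≤ (Lψ : ℝ) ^ 2 * ‖x1 - xk‖ ^ 2 := by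
    have h := mul_self_le_mul_self hΔn hb
    calc ‖ψ' x1 - ψ' xk‖ ^ 2 = ‖ψ' x1 - ψ' xk‖ * ‖ψ' x1 - ψ' xk‖ := pow_two _
      _ ≤ ((Lψ : ℝ) * ‖x1 - xk‖) * ((Lψ : ℝ) * ‖x1 - xk‖) := h
      _ = (Lψ : ℝ) ^ 2 * ‖x1 - xk‖ ^ 2 := by ring
  have hfinal : ‖x1 - projOn X (x1 - (ξ + ContinuousLinearMap.adjoint A y1))‖ ^ 2 ≤
      (‖ContinuousLinearMap.adjoint A (y1 - yt1)‖ + μ * ‖ψ' x1 - ψ' xk‖) ^ 2 :=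
    pow_le_pow_left₀ (norm_nonneg _) h6 2
  have hsplit : (‖ContinuousLinearMap.adjoint A (y1 - yt1)‖ + μ * ‖ψ' x1 - ψ' xk‖) ^ 2 ≤
      2 * ‖ContinuousLinearMap.adjoint A (y1 - yt1)‖ ^ 2
        + 2 * (μ ^ 2 * ‖ψ' x1 - ψ' xk‖ ^ 2) := by
    nlinarith [sq_nonneg (‖ContinuousLinearMap.adjoint A (y1 - yt1)‖ - μ * ‖ψ' x1 - ψ' xk‖)]
  have h7 := mul_le_mul_of_nonneg_left hb2 (by positivity : (0:ℝ) ≤ μ ^ 2)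
  linarith [hfinal, hsplit, ha2, h7]
end
end

section
/- (Dual residual bound.) Let (x^{k+1}, ỹ^{k+1}, y^{k+1}) be produced by one SPIDA iteration from (x^k, y^k), with φ differentiable convex and ∇φ Lipschitz continuous with modulus L_φ. Then there exists ζ^{k+1} ∈ ∂g(y^{k+1}) such that ‖y^{k+1} − Π_Y[y^{k+1} − (ζ^{k+1} − Ax^{k+1})]‖² ≤ γ² L_φ² ‖y^{k+1} − y^k‖² ≤ 2γ² L_φ² ‖y^{k+1} − ỹ^{k+1}‖² + 2γ² L_φ² ‖ỹ^{k+1} − y^k‖², where Π_Y is the Euclidean projection onto Y. -/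
noncomputable section
open scoped RealInnerProductSpace
open Filter
open scoped Topology

/-- Moreau–Rockafellar style decomposition: if `dvec` is a subgradient of `g`
relative to the convex set `Y` at `y1 ∈ Y`, then it splits as a true (global)
subgradient of `g` at `y1` plus a normal vector to `Y` at `y1`. -/
lemma subgrad_decomp {d : ℕ} (g : Euc d → ℝ) (hg : ConvexOn ℝ Set.univ g)
    (Y : Set (Euc d)) (hYcv : Convex ℝ Y) (y1 : Euc d) (hy1 : y1 ∈ Y) (dvec : Euc d)
    (hvi : ∀ w ∈ Y, ⟪dvec, w - y1⟫ ≤ g w - g y1) :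
    ∃ ζ ∈ subdiff g y1, ∀ w ∈ Y, ⟪dvec - ζ, w - y1⟫ ≤ 0 := by
  have hcont : Continuous g := by
    have := hg.continuousOn isOpen_univ
    rwa [continuousOn_univ] at this
  set G : Euc d → ℝ := fun w => g w - g y1 - ⟪dvec, w - y1⟫ with hG
  have hGcont : Continuous G := by
    apply (hcont.sub continuous_const).sub
    exact Continuous.inner continuous_const (continuous_id.sub continuous_const)
  set s1 : Set (Euc d × ℝ) := {p | G p.1 < p.2} with hs1
  have hs1open : IsOpen s1 := isOpen_lt (hGcont.comp continuous_fst) continuous_snd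
  have hGcv : ConvexOn ℝ Set.univ G := by
    constructor
    · exact convex_univ
    · intro a _ b _ u v hu hv huv
      have h1 : g (u • a + v • b) ≤ u * g a + v * g b := by
        simpa [smul_eq_mul] using hg.2 (Set.mem_univ a) (Set.mem_univ b) hu hv huv
      have e : ⟪dvec, u • a + v • b - y1⟫
          = u * ⟪dvec, a - y1⟫ + v * ⟪dvec, b - y1⟫ := by
        rw [inner_sub_right, inner_add_right, real_inner_smul_right,
          real_inner_smul_right, inner_sub_right, inner_sub_right]
        have h0 : u * ⟪dvec, y1⟫ + v * ⟪dvec, y1⟫ = ⟪dvec, y1⟫ := by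
          linear_combination (⟪dvec, y1⟫ : ℝ) * huv
        linarith
      simp only [hG, smul_eq_mul]
      have hgy1 : u * g y1 + v * g y1 = g y1 := by
        linear_combination (g y1) * huv
      linarith [h1, e]
  have hs1cv : Convex ℝ s1 := by
    rintro ⟨a, ta⟩ ha ⟨b, tb⟩ hb u v hu hv huv
    simp only [hs1, Set.mem_setOf_eq] at ha hb ⊢
    have h1 : G (u • a + v • b) ≤ u * G a + v * G b := by
      simpa [smul_eq_mul] using hGcv.2 (Set.mem_univ a) (Set.mem_univ b) hu hv huv
    have h2 : u * G a + v * G b < u * ta + v * tb := by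
      rcases hu.lt_or_eq with hu' | hu'
      · exact add_lt_add_of_lt_of_le (by nlinarith) (by nlinarith)
      · have hv' : v = 1 := by linarith
        rw [← hu', hv']; simpa using hb
    simpa using lt_of_le_of_lt h1 h2
  set s2 : Set (Euc d × ℝ) := Y ×ˢ Set.Iic 0 with hs2
  have hs2cv : Convex ℝ s2 := hYcv.prod (convex_Iic 0)
  have hdisj : Disjoint s1 s2 := by
    rw [Set.disjoint_left]
    rintro ⟨w, t⟩ h1 h2
    simp only [hs1, Set.mem_setOf_eq] at h1
    obtain ⟨hwY, ht⟩ := h2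
    have h0 : (0 : ℝ) ≤ G w := by
      have := hvi w hwY
      simp only [hG]; linarith
    simp only [Set.mem_Iic] at ht
    linarith
  obtain ⟨F, u, hFs1, hFs2⟩ := geometric_hahn_banach_open hs1cv hs1open hs2cv hdisj
  have hdecomp : ∀ (y : Euc d) (t : ℝ), F (y, t) = F (y, 0) + t * F (0, 1) := by
    intro y t
    have h : ((y, t) : Euc d × ℝ) = (y, (0 : ℝ)) + t • ((0 : Euc d), (1 : ℝ)) := by
      simp [Prod.ext_iff]
    rw [h, map_add, map_smul, smul_eq_mul]
  set c : ℝ := F (0, 1) with hc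
  have hGy1 : G y1 = 0 := by simp [hG]
  have hcneg : c < 0 := by
    have h1 := hFs1 (y1, 1) (by simp [hs1, hGy1])
    have h2 := hFs2 (y1, 0) (by simp [hs2, hy1])
    rw [hdecomp y1 1] at h1
    rw [hdecomp y1 0] at h2
    linarith
  have hc0 : c ≠ 0 := hcneg.ne
  set v : Euc d := (InnerProductSpace.toDual ℝ (Euc d)).symm
    (F.comp (ContinuousLinearMap.inl ℝ (Euc d) ℝ)) with hv
  have hvapp : ∀ y : Euc d, ⟪v, y⟫ = F (y, 0) := by
    intro y
    rw [hv, InnerProductSpace.toDual_symm_apply]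
    simp
  -- (a)  ∀ w, ⟪v, w⟫ + G w * c ≤ u
  have ha : ∀ w : Euc d, ⟪v, w⟫ + G w * c ≤ u := by
    intro w
    have h : ∀ ε > (0 : ℝ), ⟪v, w⟫ + (G w + ε) * c < u := by
      intro ε hε
      have h := hFs1 (w, G w + ε) (by simp [hs1, hε])
      rw [hdecomp w (G w + ε)] at h
      rw [hvapp w]; linarith
    by_contra hcon
    push_neg at hcon
    set ε : ℝ := (⟪v, w⟫ + G w * c - u) / (-c) with hε
    have hεpos : 0 < ε := div_pos (by linarith) (by linarith)
    have h2 := h ε hεpos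
    have h3 : ε * c = -(⟪v, w⟫ + G w * c - u) := by
      rw [hε, div_mul_eq_mul_div, mul_div_assoc, div_neg, div_self hc0]; ring
    nlinarith
  -- (b)  ∀ w ∈ Y, u ≤ ⟪v, w⟫
  have hb : ∀ w ∈ Y, u ≤ ⟪v, w⟫ := by
    intro w hw
    have h := hFs2 (w, 0) (by simp [hs2, hw])
    rw [hdecomp w 0] at h
    rw [hvapp w]; linarith
  have hueq : u = ⟪v, y1⟫ := by
    have h1 := ha y1
    rw [hGy1] at h1
    have h2 := hb y1 hy1
    linarith
  have hβ : (0 : ℝ) < -c := by linarith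
  refine ⟨dvec + (-c)⁻¹ • v, ?_, ?_⟩
  · intro z
    have h1 := ha z
    have h2 : ⟪v, z - y1⟫ ≤ (-c) * G z := by
      rw [inner_sub_right, ← hueq]
      linarith
    have h3 : (-c)⁻¹ * ⟪v, z - y1⟫ ≤ G z := by
      have h4 := mul_le_mul_of_nonneg_left h2 (inv_pos.mpr hβ).le
      rw [← mul_assoc, inv_mul_cancel₀ (neg_ne_zero.mpr hc0), one_mul] at h4
      exact h4
    have e : ⟪z - y1, dvec + (-c)⁻¹ • v⟫
        = ⟪dvec, z - y1⟫ + (-c)⁻¹ * ⟪v, z - y1⟫ := by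
      rw [inner_add_right, real_inner_smul_right,
        real_inner_comm (z - y1) dvec, real_inner_comm (z - y1) v]
    rw [e]
    simp only [hG] at h3
    linarith
  · intro w hw
    have h1 : (0 : ℝ) ≤ ⟪v, w - y1⟫ := by
      rw [inner_sub_right, ← hueq]
      linarith [hb w hw]
    have e : dvec - (dvec + (-c)⁻¹ • v) = -((-c)⁻¹ • v) := by abel
    rw [e, inner_neg_left, real_inner_smul_left]
    have : (0 : ℝ) ≤ (-c)⁻¹ * ⟪v, w - y1⟫ :=
      mul_nonneg (inv_pos.mpr hβ).le h1
    linarith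

/-- `projOn` of a nonempty closed convex set satisfies the variational inequality. -/
lemma projOn_spec_s14 {d : ℕ} {Y : Set (Euc d)} (hne : Y.Nonempty) (hcl : IsClosed Y)
    (hcv : Convex ℝ Y) (z : Euc d) :
    projOn Y z ∈ Y ∧ ∀ w ∈ Y, ⟪z - projOn Y z, w - projOn Y z⟫ ≤ 0 := by
  haveI : Nonempty Y := hne.to_subtype
  have hbdd : ∀ u : Euc d, BddBelow (Set.range fun w : Y => ‖u - (w : Euc d)‖) := by
    intro u
    refine ⟨0, ?_⟩
    rintro a ⟨w, rfl⟩
    exact norm_nonneg _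
  obtain ⟨v, hvY, hvmin⟩ :=
    exists_norm_eq_iInf_of_complete_convex hne hcl.isComplete hcv z
  have hex : ∃ p ∈ Y, ∀ w ∈ Y, ‖z - p‖ ≤ ‖z - w‖ := by
    refine ⟨v, hvY, fun w hw => ?_⟩
    rw [hvmin]
    exact ciInf_le (hbdd z) (⟨w, hw⟩ : Y)
  rw [projOn, dif_pos hex]
  obtain ⟨hpY, hpmin⟩ := hex.choose_spec
  refine ⟨hpY, ?_⟩
  rw [← norm_eq_iInf_iff_real_inner_le_zero hcv hpY]
  refine le_antisymm (le_ciInf fun w => hpmin w w.2) (ciInf_le (hbdd z) ⟨_, hpY⟩)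

/-- Variational inequality from the `y`-maximization step. -/
lemma key_vi {m : ℕ} {Y : Set (Euc m)} (hYcv : Convex ℝ Y)
    (g : Euc m → ℝ) (hg : ConvexOn ℝ Set.univ g)
    (φ : Euc m → ℝ) (φ' : Euc m → Euc m) (hφg : ∀ z, HasGradientAt φ (φ' z) z)
    (b : Euc m) (γ : ℝ) (yk y1 : Euc m) (hy1 : y1 ∈ Y)
    (hmax : ∀ y ∈ Y, -g y + ⟪b, y⟫ - γ * Breg φ φ' y yk ≤
      -g y1 + ⟪b, y1⟫ - γ * Breg φ φ' y1 yk) :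
    ∀ y ∈ Y, ⟪b - γ • (φ' y1 - φ' yk), y - y1⟫ ≤ g y - g y1 := by
  intro y hy
  set u : Euc m := y - y1 with hu
  -- derivative of t ↦ φ (y1 + t • u) at 0
  have hc0 : HasDerivAt (fun t : ℝ => y1 + t • u) u 0 := by
    simpa using ((hasDerivAt_id (0 : ℝ)).smul_const u).const_add y1
  have hφd : HasDerivAt (fun t : ℝ => φ (y1 + t • u)) ⟪φ' y1, u⟫ 0 := by
    have hF' : HasFDerivAt φ (InnerProductSpace.toDual ℝ (Euc m) (φ' y1))
        ((fun t : ℝ => y1 + t • u) 0) := by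
      simpa using (hφg y1).hasFDerivAt
    have h := hF'.comp_hasDerivAt 0 hc0
    simp [Function.comp, InnerProductSpace.toDual_apply_apply] at h
    exact h
  have hslope : Tendsto (fun t : ℝ => (φ (y1 + t • u) - φ y1) / t) (𝓝[>] 0)
      (𝓝 ⟪φ' y1, u⟫) := by
    have h := hasDerivAt_iff_tendsto_slope.mp hφd
    have h2 := h.mono_left (nhdsWithin_mono 0 (fun t (ht : t ∈ Set.Ioi (0:ℝ)) =>
      (ne_of_gt ht : t ≠ 0)))
    refine h2.congr fun t => ?_
    simp [slope_def_field]
  have hT : Tendsto (fun t : ℝ =>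
      ⟪b, u⟫ + γ * ⟪φ' yk, u⟫ - γ * ((φ (y1 + t • u) - φ y1) / t)) (𝓝[>] 0)
      (𝓝 (⟪b, u⟫ + γ * ⟪φ' yk, u⟫ - γ * ⟪φ' y1, u⟫)) :=
    tendsto_const_nhds.sub (hslope.const_mul γ)
  have hfinal : ⟪b, u⟫ + γ * ⟪φ' yk, u⟫ - γ * ⟪φ' y1, u⟫ ≤ g y - g y1 := by
    refine le_of_tendsto hT ?_
    filter_upwards [Ioc_mem_nhdsGT (zero_lt_one : (0:ℝ) < 1)] with t ht
    obtain ⟨ht0, ht1⟩ := ht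
    have hyt : y1 + t • u ∈ Y := by
      have h := hYcv hy1 hy (by linarith : (0:ℝ) ≤ 1 - t) ht0.le (by ring)
      have heq : (1 - t) • y1 + t • y = y1 + t • u := by
        rw [hu]; module
      rwa [heq] at h
    have h1 := hmax _ hyt
    have h2 : g (y1 + t • u) ≤ (1 - t) * g y1 + t * g y := by
      have h := hg.2 (Set.mem_univ y1) (Set.mem_univ y)
        (by linarith : (0:ℝ) ≤ 1 - t) ht0.le (by ring)
      have heq : (1 - t) • y1 + t • y = y1 + t • u := by
        rw [hu]; module
      rw [heq] at h
      simpa [smul_eq_mul] using h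
    -- expand the inner products in h1
    have e1 : ⟪b, y1 + t • u⟫ = ⟪b, y1⟫ + t * ⟪b, u⟫ := by
      rw [inner_add_right, real_inner_smul_right]
    have e2 : ⟪φ' yk, y1 + t • u - yk⟫ = ⟪φ' yk, y1 - yk⟫ + t * ⟪φ' yk, u⟫ := by
      have : y1 + t • u - yk = (y1 - yk) + t • u := by abel
      rw [this, inner_add_right, real_inner_smul_right]
    rw [Breg, Breg, e1, e2] at h1
    set P : ℝ := φ (y1 + t • u) - φ y1 with hP
    have key : t * ⟪b, u⟫ - γ * P + γ * (t * ⟪φ' yk, u⟫) ≤ t * (g y - g y1) := by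
      rw [hP]
      ring_nf at h1 h2 ⊢
      linarith
    have hG : t * (⟪b, u⟫ + γ * ⟪φ' yk, u⟫ - γ * (P / t)) =
        t * ⟪b, u⟫ - γ * P + γ * (t * ⟪φ' yk, u⟫) := by
      field_simp
      ring
    have hmul : t * (⟪b, u⟫ + γ * ⟪φ' yk, u⟫ - γ * (P / t)) ≤ t * (g y - g y1) := by
      rw [hG]; exact key
    exact le_of_mul_le_mul_left hmul ht0
  have hexp : ⟪b - γ • (φ' y1 - φ' yk), u⟫ =
      ⟪b, u⟫ + γ * ⟪φ' yk, u⟫ - γ * ⟪φ' y1, u⟫ := by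
    rw [inner_sub_left, real_inner_smul_left, inner_sub_left]
    ring
  rw [hexp]
  exact hfinal

/-- dual residual bound for one SPIDA iteration. -/
theorem spida_dual_residual_bound {n m : ℕ}
    (X : Set (Euc n)) (Y : Set (Euc m))
    (hXne : X.Nonempty) (hXcl : IsClosed X) (hXcv : Convex ℝ X)
    (hYne : Y.Nonempty) (hYcl : IsClosed Y) (hYcv : Convex ℝ Y)
    (f : Euc n → ℝ) (g : Euc m → ℝ)
    (hf : ConvexOn ℝ Set.univ f) (hflsc : LowerSemicontinuous f)
    (hg : ConvexOn ℝ Set.univ g) (hglsc : LowerSemicontinuous g)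
    (A : Euc n →L[ℝ] Euc m)
    (γ μ : ℝ) (hγ : 0 < γ) (hμ : 0 < μ)
    (φ : Euc m → ℝ) (φ' : Euc m → Euc m)
    (hφg : ∀ z, HasGradientAt φ (φ' z) z) (hφcv : ConvexOn ℝ Set.univ φ)
    (ψ : Euc n → ℝ) (ψ' : Euc n → Euc n)
    (hψg : ∀ z, HasGradientAt ψ (ψ' z) z) (hψcv : ConvexOn ℝ Set.univ ψ)
    (xk x1 : Euc n) (yk yt1 y1 : Euc m)
    (hxk : xk ∈ X) (hyk : yk ∈ Y)
    (hyt1mem : yt1 ∈ Y)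
    (hyt1max : ∀ y ∈ Y, -g y + ⟪A xk, y⟫ - γ * Breg φ φ' y yk ≤
      -g yt1 + ⟪A xk, yt1⟫ - γ * Breg φ φ' yt1 yk)
    (hx1mem : x1 ∈ X)
    (hx1min : ∀ x ∈ X, f x1 + ⟪A x1, yt1⟫ + μ * Breg ψ ψ' x1 xk ≤
      f x + ⟪A x, yt1⟫ + μ * Breg ψ ψ' x xk)
    (hy1mem : y1 ∈ Y)
    (hy1max : ∀ y ∈ Y, -g y + ⟪A x1, y⟫ - γ * Breg φ φ' y yk ≤
      -g y1 + ⟪A x1, y1⟫ - γ * Breg φ φ' y1 yk)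
    (Lφ : NNReal) (hφlip : LipschitzWith Lφ φ') :
    ∃ ζ ∈ subdiff g y1,
      ‖y1 - projOn Y (y1 - (ζ - A x1))‖ ^ 2 ≤ γ ^ 2 * (Lφ : ℝ) ^ 2 * ‖y1 - yk‖ ^ 2 ∧
        γ ^ 2 * (Lφ : ℝ) ^ 2 * ‖y1 - yk‖ ^ 2 ≤
          2 * γ ^ 2 * (Lφ : ℝ) ^ 2 * ‖y1 - yt1‖ ^ 2
            + 2 * γ ^ 2 * (Lφ : ℝ) ^ 2 * ‖yt1 - yk‖ ^ 2 := by
  have hvi := key_vi hYcv g hg φ φ' hφg (A x1) γ yk y1 hy1mem hy1max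
  obtain ⟨ζ, hζ, hnorm⟩ := subgrad_decomp g hg Y hYcv y1 hy1mem
    (A x1 - γ • (φ' y1 - φ' yk)) hvi
  refine ⟨ζ, hζ, ?_, ?_⟩
  · -- first inequality
    set z : Euc m := y1 - (ζ - A x1) with hz
    obtain ⟨hpY, hVI⟩ := projOn_spec_s14 hYne hYcl hYcv z
    set p : Euc m := projOn Y z with hp
    -- ⟪z - y1, p - y1⟫ ≥ ‖p - y1‖²
    have h1 : ‖p - y1‖ ^ 2 ≤ ⟪z - y1, p - y1⟫ := by
      have hVIy1 := hVI y1 hy1mem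
      have e : ⟪p - y1, p - y1⟫ = ⟪p - z, p - y1⟫ + ⟪z - y1, p - y1⟫ := by
        rw [← inner_add_left]; congr 1; abel
      have e2 : ⟪p - z, p - y1⟫ = ⟪z - p, y1 - p⟫ := by
        rw [show p - z = -(z - p) from by abel, show p - y1 = -(y1 - p) from by abel,
          inner_neg_neg]
      rw [← real_inner_self_eq_norm_sq, e, e2]
      linarith
    -- normal cone bound
    have h2 : ⟪z - y1, p - y1⟫ ≤ γ * ⟪φ' y1 - φ' yk, p - y1⟫ := by
      have e : z - y1 = (A x1 - γ • (φ' y1 - φ' yk) - ζ) + γ • (φ' y1 - φ' yk) := by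
        rw [hz]; module
      rw [e, inner_add_left, real_inner_smul_left]
      linarith [hnorm p hpY]
    have hΔ : ‖φ' y1 - φ' yk‖ ≤ (Lφ : ℝ) * ‖y1 - yk‖ := by
      have := hφlip.dist_le_mul y1 yk
      rwa [dist_eq_norm, dist_eq_norm] at this
    have h3 : ⟪φ' y1 - φ' yk, p - y1⟫ ≤ ‖φ' y1 - φ' yk‖ * ‖p - y1‖ :=
      real_inner_le_norm _ _
    have hM : ‖p - y1‖ ^ 2 ≤ γ * ((Lφ : ℝ) * ‖y1 - yk‖) * ‖p - y1‖ := by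
      have hn : (0 : ℝ) ≤ ‖p - y1‖ := norm_nonneg _
      nlinarith [h1, h2, h3, hΔ, hγ.le,
        mul_le_mul_of_nonneg_left h3 hγ.le,
        mul_le_mul_of_nonneg_left (mul_le_mul_of_nonneg_right hΔ hn) hγ.le,
        norm_nonneg (φ' y1 - φ' yk)]
    have hfin : ‖p - y1‖ ≤ γ * (Lφ : ℝ) * ‖y1 - yk‖ := by
      rcases eq_or_lt_of_le (norm_nonneg (p - y1)) with h0 | h0
      · rw [← h0]; positivity
      · nlinarith [hM]
    have hrev : ‖y1 - p‖ = ‖p - y1‖ := norm_sub_rev _ _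
    rw [hrev]
    have hMnn : (0:ℝ) ≤ γ * (Lφ : ℝ) * ‖y1 - yk‖ := by positivity
    nlinarith [hfin, norm_nonneg (p - y1), hMnn]
  · -- second inequality
    have habc : ‖y1 - yk‖ ^ 2 ≤ 2 * ‖y1 - yt1‖ ^ 2 + 2 * ‖yt1 - yk‖ ^ 2 := by
      have he : y1 - yk = (y1 - yt1) + (yt1 - yk) := by abel
      have h := norm_add_le (y1 - yt1) (yt1 - yk)
      rw [he]
      nlinarith [h, norm_nonneg (y1 - yt1 + (yt1 - yk)), norm_nonneg (y1 - yt1),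
        norm_nonneg (yt1 - yk), sq_nonneg (‖y1 - yt1‖ - ‖yt1 - yk‖)]
    have hnn : (0 : ℝ) ≤ γ ^ 2 * (Lφ : ℝ) ^ 2 := by positivity
    nlinarith [habc, hnn]
end
end
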